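/- Let P and Q be probability distributions over a measurable space Y such that P(A) ≤ e^ε·Q(A) + δ and Q(A) ≤ e^ε·P(A) + δ for all measurable A. Then there exist δ' ∈ [0,δ] and distributions P', Q', P'', Q'' on Y such that P = (1-δ')P' + δ'P'', Q = (1-δ')Q' + δ'Q'', and for all measurable A, e^{-ε}·P'(A) ≤ Q'(A) ≤ e^ε·P'(A); moreover there exist measurable sets S, T with P''(S)=1, Q''(T)=1, P(S') ≥ Q(S') for all measurable S' ⊆ S, and Q(T') ≥ P(T') for all measurable T' ⊆ T. -/

import Mathlib

open MeasureTheory Real Set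
open scoped ENNReal Classical

section Aux
variable {Y : Type*} [MeasurableSpace Y]

/-- Density of the "bad" part to be peeled off `P`. -/
noncomputable def pden (k k' c : ℝ≥0∞) (f g : Y → ℝ≥0∞) : Y → ℝ≥0∞ :=
  fun y => (if k * g y < f y then f y - k * g y else 0)
    + c * (if g y ≤ f y then min (f y) (k * g y) - k' * g y else 0)

variable {k k' c d : ℝ≥0∞} {f g : Y → ℝ≥0∞}

lemma measurable_pden (hf : Measurable f) (hg : Measurable g) :
    Measurable (pden k k' c f g) := by
  apply Measurable.add
  · exact Measurable.ite (measurableSet_lt (hg.const_mul k) hf)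
      (hf.sub (hg.const_mul k)) measurable_const
  · exact (Measurable.ite (measurableSet_le hg hf)
      ((hf.min (hg.const_mul k)).sub (hg.const_mul k')) measurable_const).const_mul c

lemma pden_add_le (hk : 1 ≤ k) (hk' : k' ≤ 1) (hc : c ≤ 1) {y : Y} (hgf : g y ≤ f y) :
    pden k k' c f g y + k' * g y ≤ f y := by
  have hk'g_g : k' * g y ≤ g y := by
    calc k' * g y ≤ 1 * g y := mul_le_mul_left hk' _
    _ = g y := one_mul _
  have hk'g_min : k' * g y ≤ min (f y) (k * g y) := by
    refine le_min (hk'g_g.trans hgf) ?_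
    exact mul_le_mul_left (hk'.trans hk) _
  have h1 : pden k k' c f g y ≤ (if k * g y < f y then f y - k * g y else 0)
      + (if g y ≤ f y then min (f y) (k * g y) - k' * g y else 0) := by
    refine add_le_add_right ?_ _
    exact mul_le_of_le_one_left (zero_le) hc
  calc pden k k' c f g y + k' * g y
      ≤ ((if k * g y < f y then f y - k * g y else 0)
        + (if g y ≤ f y then min (f y) (k * g y) - k' * g y else 0)) + k' * g y :=
        add_le_add_left h1 _
    _ = (if k * g y < f y then f y - k * g y else 0) + min (f y) (k * g y) := by
        rw [if_pos hgf, add_assoc, tsub_add_cancel_of_le hk'g_min]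
    _ = f y := by
        by_cases h : k * g y < f y
        · rw [if_pos h, min_eq_right h.le, tsub_add_cancel_of_le h.le]
        · rw [if_neg h, min_eq_left (not_lt.mp h), zero_add]

lemma pden_of_lt (hk : 1 ≤ k) {y : Y} (h : f y < g y) : pden k k' c f g y = 0 := by
  have h1 : ¬ (k * g y < f y) := by
    refine not_lt.mpr ?_
    calc f y ≤ g y := h.le
    _ = 1 * g y := (one_mul _).symm
    _ ≤ k * g y := mul_le_mul_left hk _
  have h2 : ¬ (g y ≤ f y) := not_le.mpr h
  simp [pden, h1, h2]

lemma pden_le (hk : 1 ≤ k) (hk' : k' ≤ 1) (hc : c ≤ 1) (y : Y) :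
    pden k k' c f g y ≤ f y := by
  rcases le_or_gt (g y) (f y) with h | h
  · exact (le_add_right le_rfl).trans (pden_add_le hk hk' hc h)
  · rw [pden_of_lt hk h]; exact zero_le

/-- The key pointwise ratio bound. -/
lemma pden_ratio (hk : 1 ≤ k) (hk' : k' ≤ 1) (hkk' : k * k' = 1) (hc : c ≤ 1)
    {y : Y} (hffin : f y ≠ ∞) (hgfin : g y ≠ ∞) :
    g y - pden k k' d g f y ≤ k * (f y - pden k k' c f g y) := by
  rcases le_or_gt (g y) (f y) with hgf | hfg
  · have hpfin : pden k k' c f g y ≠ ∞ := ((pden_le hk hk' hc y).trans_lt hffin.lt_top).ne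
    have h1 : k' * g y ≤ f y - pden k k' c f g y :=
      ENNReal.le_sub_of_add_le_left hpfin
        (pden_add_le hk hk' hc hgf)
    calc g y - pden k k' d g f y ≤ g y := tsub_le_self
      _ = k * (k' * g y) := by rw [← mul_assoc, hkk', one_mul]
      _ ≤ k * (f y - pden k k' c f g y) := mul_le_mul_right h1 _
  · rw [pden_of_lt hk hfg, tsub_zero]
    have hq : (if k * f y < g y then g y - k * f y else 0) ≤ pden k k' d g f y :=
      le_add_right le_rfl
    by_cases h2 : k * f y < g y
    · rw [if_pos h2] at hq
      calc g y - pden k k' d g f y ≤ g y - (g y - k * f y) := tsub_le_tsub_left hq _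
        _ = k * f y := ENNReal.sub_sub_cancel hgfin h2.le
    · calc g y - pden k k' d g f y ≤ g y := tsub_le_self
        _ ≤ k * f y := not_lt.mp h2


/-- The key budget inequality. -/
lemma budget (μ : Measure Y) (k k' : ℝ≥0∞) (hk : 1 ≤ k) (hk' : k' ≤ 1) (hktop : k ≠ ∞)
    (f g : Y → ℝ≥0∞) (hf : Measurable f) (hg : Measurable g)
    (hfI : ∫⁻ y, f y ∂μ = 1) (hgI : ∫⁻ y, g y ∂μ = 1) :
    (∫⁻ y, (if k * f y < g y then g y - k * f y else 0) ∂μ)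
      ≤ (∫⁻ y, (if k * g y < f y then f y - k * g y else 0) ∂μ)
        + ∫⁻ y, (if g y ≤ f y then min (f y) (k * g y) - k' * g y else 0) ∂μ := by
  classical
  set FS : Y → ℝ≥0∞ := fun y => if g y ≤ f y then f y else 0 with hFS
  set FB : Y → ℝ≥0∞ := fun y => if k * f y < g y then f y else 0 with hFB
  set FD : Y → ℝ≥0∞ := fun y => if f y < g y ∧ g y ≤ k * f y then f y else 0 with hFD
  set GS : Y → ℝ≥0∞ := fun y => if g y ≤ f y then g y else 0 with hGS
  set GB : Y → ℝ≥0∞ := fun y => if k * f y < g y then g y else 0 with hGB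
  set GD : Y → ℝ≥0∞ := fun y => if f y < g y ∧ g y ≤ k * f y then g y else 0 with hGD
  have hmS : MeasurableSet {y | g y ≤ f y} := measurableSet_le hg hf
  have hmB : MeasurableSet {y | k * f y < g y} := measurableSet_lt (hf.const_mul k) hg
  have hmD : MeasurableSet {y | f y < g y ∧ g y ≤ k * f y} := by
    have hset : {y | f y < g y ∧ g y ≤ k * f y}
        = {y | f y < g y} ∩ {y | g y ≤ k * f y} := rfl
    rw [hset]
    exact (measurableSet_lt hf hg).inter (measurableSet_le hg (hf.const_mul k))
  have hmFS : Measurable FS := Measurable.ite hmS hf measurable_const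
  have hmFB : Measurable FB := Measurable.ite hmB hf measurable_const
  have hmFD : Measurable FD := Measurable.ite hmD hf measurable_const
  have hmGS : Measurable GS := Measurable.ite hmS hg measurable_const
  have hmGB : Measurable GB := Measurable.ite hmB hg measurable_const
  have hmGD : Measurable GD := Measurable.ite hmD hg measurable_const
  have hmA : MeasurableSet {y | k * g y < f y} := measurableSet_lt (hg.const_mul k) hf
  have hmIA : Measurable (fun y => if k * g y < f y then f y - k * g y else 0) :=
    Measurable.ite hmA (hf.sub (hg.const_mul k)) measurable_const
  have hmIW : Measurable (fun y => if g y ≤ f y then min (f y) (k * g y) - k' * g y else 0) :=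
    Measurable.ite hmS ((hf.min (hg.const_mul k)).sub (hg.const_mul k')) measurable_const
  have hmIB : Measurable (fun y => if k * f y < g y then g y - k * f y else 0) :=
    Measurable.ite hmB (hg.sub (hf.const_mul k)) measurable_const
  set IA := ∫⁻ y, (if k * g y < f y then f y - k * g y else 0) ∂μ with hIA
  set IW := ∫⁻ y, (if g y ≤ f y then min (f y) (k * g y) - k' * g y else 0) ∂μ with hIW
  set IB := ∫⁻ y, (if k * f y < g y then g y - k * f y else 0) ∂μ with hIB
  set X := ∫⁻ y, (if g y ≤ f y then k' * g y else 0) ∂μ with hX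
  -- trichotomy helper
  have tricho : ∀ y : Y, (g y ≤ f y ∧ ¬ k * f y < g y ∧ ¬ (f y < g y ∧ g y ≤ k * f y))
      ∨ (¬ g y ≤ f y ∧ k * f y < g y ∧ ¬ (f y < g y ∧ g y ≤ k * f y))
      ∨ (¬ g y ≤ f y ∧ ¬ k * f y < g y ∧ (f y < g y ∧ g y ≤ k * f y)) := by
    intro y
    by_cases h1 : g y ≤ f y
    · have hkf : f y ≤ k * f y := by
        calc f y = 1 * f y := (one_mul _).symm
          _ ≤ k * f y := mul_le_mul_left hk _
      exact Or.inl ⟨h1, not_lt.mpr (h1.trans hkf), fun hc => absurd hc.1 (not_lt.mpr h1)⟩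
    · by_cases h2 : k * f y < g y
      · exact Or.inr (Or.inl ⟨h1, h2, fun hc => absurd h2 (not_lt.mpr hc.2)⟩)
      · exact Or.inr (Or.inr ⟨h1, h2, ⟨not_le.mp h1, not_lt.mp h2⟩⟩)
  have hXle : X ≤ 1 := by
    rw [← hgI]
    refine lintegral_mono fun y => ?_
    by_cases h : g y ≤ f y
    · rw [if_pos h]
      calc k' * g y ≤ 1 * g y := mul_le_mul_left hk' _
        _ = g y := one_mul _
    · rw [if_neg h]; exact zero_le
  have hJFB : ∫⁻ y, FB y ∂μ ≤ 1 := by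
    rw [← hfI]; refine lintegral_mono fun y => ?_
    simp only [hFB]
    by_cases h : k * f y < g y
    · rw [if_pos h]
    · rw [if_neg h]; exact zero_le
  have hJFD : ∫⁻ y, FD y ∂μ ≤ 1 := by
    rw [← hfI]; refine lintegral_mono fun y => ?_
    simp only [hFD]
    by_cases h : f y < g y ∧ g y ≤ k * f y
    · rw [if_pos h]
    · rw [if_neg h]; exact zero_le
  have hsplitF : ∫⁻ y, FS y ∂μ + ∫⁻ y, FB y ∂μ + ∫⁻ y, FD y ∂μ = 1 := by
    rw [← hfI, ← lintegral_add_left hmFS, ← lintegral_add_left (f := fun y => FS y + FB y) (hmFS.add hmFB)]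
    refine (lintegral_congr fun y => ?_).symm
    rcases tricho y with ⟨h1, h2, h3⟩ | ⟨h1, h2, h3⟩ | ⟨h1, h2, h3⟩ <;>
      simp only [hFS, hFB, hFD] <;>
      first
        | rw [if_pos h1, if_neg h2, if_neg h3, add_zero, add_zero]
        | rw [if_neg h1, if_pos h2, if_neg h3, zero_add, add_zero]
        | rw [if_neg h1, if_neg h2, if_pos h3, zero_add, zero_add]
  have hsplitG : ∫⁻ y, GS y ∂μ + ∫⁻ y, GB y ∂μ + ∫⁻ y, GD y ∂μ = 1 := by
    rw [← hgI, ← lintegral_add_left hmGS, ← lintegral_add_left (f := fun y => GS y + GB y) (hmGS.add hmGB)]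
    refine (lintegral_congr fun y => ?_).symm
    rcases tricho y with ⟨h1, h2, h3⟩ | ⟨h1, h2, h3⟩ | ⟨h1, h2, h3⟩ <;>
      simp only [hGS, hGB, hGD] <;>
      first
        | rw [if_pos h1, if_neg h2, if_neg h3, add_zero, add_zero]
        | rw [if_neg h1, if_pos h2, if_neg h3, zero_add, add_zero]
        | rw [if_neg h1, if_neg h2, if_pos h3, zero_add, zero_add]
  have h1 : IA + IW + X = ∫⁻ y, FS y ∂μ := by
    rw [hIA, hIW, hX, ← lintegral_add_left hmIA, ← lintegral_add_left (f := fun y => (if k * g y < f y then f y - k * g y else 0) + (if g y ≤ f y then min (f y) (k * g y) - k' * g y else 0)) (hmIA.add hmIW)]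
    refine lintegral_congr fun y => ?_
    by_cases hS : g y ≤ f y
    · have hk'g_g : k' * g y ≤ g y := by
        calc k' * g y ≤ 1 * g y := mul_le_mul_left hk' _
          _ = g y := one_mul _
      have hk'g_min : k' * g y ≤ min (f y) (k * g y) :=
        le_min (hk'g_g.trans hS) (mul_le_mul_left (hk'.trans hk) _)
      simp only [hFS, if_pos hS]
      rw [add_assoc, tsub_add_cancel_of_le hk'g_min]
      by_cases hA : k * g y < f y
      · rw [if_pos hA, min_eq_right hA.le, tsub_add_cancel_of_le hA.le]
      · rw [if_neg hA, min_eq_left (not_lt.mp hA), zero_add]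
    · have hA : ¬ k * g y < f y := by
        refine not_lt.mpr ?_
        calc f y ≤ g y := (not_le.mp hS).le
          _ = 1 * g y := (one_mul _).symm
          _ ≤ k * g y := mul_le_mul_left hk _
      simp only [hFS]
      rw [if_neg hS, if_neg hA, if_neg hS, if_neg hS, add_zero, add_zero]
  have h2 : IB + k * ∫⁻ y, FB y ∂μ = ∫⁻ y, GB y ∂μ := by
    have hkFB : k * ∫⁻ y, FB y ∂μ = ∫⁻ y, (if k * f y < g y then k * f y else 0) ∂μ := by
      rw [← lintegral_const_mul k hmFB]
      refine lintegral_congr fun y => ?_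
      simp only [hFB]
      by_cases h : k * f y < g y
      · rw [if_pos h, if_pos h]
      · rw [if_neg h, if_neg h, mul_zero]
    rw [hIB, hkFB, ← lintegral_add_left hmIB]
    refine lintegral_congr fun y => ?_
    simp only [hGB]
    by_cases h : k * f y < g y
    · simp only [if_pos h]
      exact tsub_add_cancel_of_le h.le
    · rw [if_neg h, if_neg h, if_neg h, add_zero]
  have h4 : X ≤ ∫⁻ y, GS y ∂μ := by
    refine lintegral_mono fun y => ?_
    simp only [hGS]
    by_cases h : g y ≤ f y
    · rw [if_pos h, if_pos h]
      calc k' * g y ≤ 1 * g y := mul_le_mul_left hk' _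
        _ = g y := one_mul _
    · rw [if_neg h, if_neg h]
  have h5 : ∫⁻ y, FD y ∂μ ≤ ∫⁻ y, GD y ∂μ := by
    refine lintegral_mono fun y => ?_
    simp only [hFD, hGD]
    by_cases h : f y < g y ∧ g y ≤ k * f y
    · rw [if_pos h, if_pos h]; exact h.1.le
    · rw [if_neg h, if_neg h]
  have hkFBfin : k * ∫⁻ y, FB y ∂μ ≠ ∞ :=
    (ENNReal.mul_lt_top hktop.lt_top (hJFB.trans_lt ENNReal.one_lt_top)).ne
  have hXfin : X ≠ ∞ := (hXle.trans_lt ENNReal.one_lt_top).ne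
  have hJFDfin : ∫⁻ y, FD y ∂μ ≠ ∞ := (hJFD.trans_lt ENNReal.one_lt_top).ne
  have key : ∫⁻ y, GB y ∂μ + X ≤ ∫⁻ y, FS y ∂μ + k * ∫⁻ y, FB y ∂μ := by
    rw [← ENNReal.add_le_add_iff_right hJFDfin]
    calc ∫⁻ y, GB y ∂μ + X + ∫⁻ y, FD y ∂μ
        ≤ ∫⁻ y, GB y ∂μ + ∫⁻ y, GS y ∂μ + ∫⁻ y, GD y ∂μ :=
          add_le_add (add_le_add_right h4 _) h5
      _ = ∫⁻ y, GS y ∂μ + ∫⁻ y, GB y ∂μ + ∫⁻ y, GD y ∂μ := by ring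
      _ = 1 := hsplitG
      _ = ∫⁻ y, FS y ∂μ + ∫⁻ y, FB y ∂μ + ∫⁻ y, FD y ∂μ := hsplitF.symm
      _ ≤ ∫⁻ y, FS y ∂μ + k * ∫⁻ y, FB y ∂μ + ∫⁻ y, FD y ∂μ := by
          refine add_le_add_left (add_le_add_right ?_ _) _
          calc ∫⁻ y, FB y ∂μ = 1 * ∫⁻ y, FB y ∂μ := (one_mul _).symm
            _ ≤ k * ∫⁻ y, FB y ∂μ := mul_le_mul_left hk _
  have final : IB + (k * ∫⁻ y, FB y ∂μ + X) ≤ (IA + IW) + (k * ∫⁻ y, FB y ∂μ + X) := by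
    calc IB + (k * ∫⁻ y, FB y ∂μ + X) = IB + k * ∫⁻ y, FB y ∂μ + X := by ring
      _ = ∫⁻ y, GB y ∂μ + X := by rw [h2]
      _ ≤ ∫⁻ y, FS y ∂μ + k * ∫⁻ y, FB y ∂μ := key
      _ = IA + IW + X + k * ∫⁻ y, FB y ∂μ := by rw [h1]
      _ = (IA + IW) + (k * ∫⁻ y, FB y ∂μ + X) := by ring
  exact (ENNReal.add_le_add_iff_right
    (ENNReal.add_ne_top.mpr ⟨hkFBfin, hXfin⟩)).mp final

end Aux

/-- **Decomposition of an indistinguishable pair** (Kairouz–Oh–Viswanath).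
If `P(A) ≤ eᵉ·Q(A) + δ` and `Q(A) ≤ eᵉ·P(A) + δ` for all measurable `A`, then there are
`δ' ∈ [0,δ]` and probability measures `P', Q', P'', Q''` with
`P = (1-δ')P' + δ'P''`, `Q = (1-δ')Q' + δ'Q''`,
`e⁻ᵉ·P'(A) ≤ Q'(A) ≤ eᵉ·P'(A)` for all measurable `A`, and measurable sets `S, T` with
`P''(S) = 1`, `Q''(T) = 1`, `P ≥ Q` on all measurable subsets of `S` and `Q ≥ P` on all
measurable subsets of `T`. -/
theorem indistinguishable_decomposition {Y : Type*} [MeasurableSpace Y]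
    (P Q : Measure Y) [IsProbabilityMeasure P] [IsProbabilityMeasure Q]
    (ε δ : ℝ) (hε : 0 ≤ ε) (hδ : 0 ≤ δ)
    (hPQ : ∀ A : Set Y, MeasurableSet A → P A ≤ ENNReal.ofReal (exp ε) * Q A + ENNReal.ofReal δ)
    (hQP : ∀ A : Set Y, MeasurableSet A → Q A ≤ ENNReal.ofReal (exp ε) * P A + ENNReal.ofReal δ) :
    ∃ (δ' : ℝ) (P' Q' P'' Q'' : Measure Y),
      0 ≤ δ' ∧ δ' ≤ δ ∧
      IsProbabilityMeasure P' ∧ IsProbabilityMeasure Q' ∧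
      IsProbabilityMeasure P'' ∧ IsProbabilityMeasure Q'' ∧
      P = ENNReal.ofReal (1 - δ') • P' + ENNReal.ofReal δ' • P'' ∧
      Q = ENNReal.ofReal (1 - δ') • Q' + ENNReal.ofReal δ' • Q'' ∧
      (∀ A : Set Y, MeasurableSet A →
        ENNReal.ofReal (exp (-ε)) * P' A ≤ Q' A ∧ Q' A ≤ ENNReal.ofReal (exp ε) * P' A) ∧
      ∃ S T : Set Y, MeasurableSet S ∧ MeasurableSet T ∧
        P'' S = 1 ∧ Q'' T = 1 ∧
        (∀ S' : Set Y, MeasurableSet S' → S' ⊆ S → Q S' ≤ P S') ∧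
        (∀ T' : Set Y, MeasurableSet T' → T' ⊆ T → P T' ≤ Q T') := by
  classical
  set k := ENNReal.ofReal (exp ε) with hk_def
  set k' := ENNReal.ofReal (exp (-ε)) with hk'_def
  have hk1 : 1 ≤ k := by
    rw [hk_def, ← ENNReal.ofReal_one]
    exact ENNReal.ofReal_le_ofReal (one_le_exp hε)
  have hk'1 : k' ≤ 1 := by
    rw [hk'_def, ← ENNReal.ofReal_one]
    exact ENNReal.ofReal_le_ofReal (exp_le_one_iff.mpr (neg_nonpos.mpr hε))
  have hktop : k ≠ ∞ := ENNReal.ofReal_ne_top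
  have hkk' : k * k' = 1 := by
    rw [hk_def, hk'_def, ← ENNReal.ofReal_mul (exp_pos ε).le, ← exp_add, add_neg_cancel,
      exp_zero, ENNReal.ofReal_one]
  have hk'k : k' * k = 1 := by rw [mul_comm]; exact hkk'
  set μ := P + Q with hμ_def
  have hPle : P ≤ μ := by rw [hμ_def]; exact Measure.le_add_right le_rfl
  have hQle : Q ≤ μ := by rw [hμ_def]; exact Measure.le_add_left le_rfl
  have hPac : P ≪ μ := hPle.absolutelyContinuous
  have hQac : Q ≪ μ := hQle.absolutelyContinuous
  set f : Y → ℝ≥0∞ := fun y => min (P.rnDeriv μ y) 1 with hf_def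
  set g : Y → ℝ≥0∞ := fun y => min (Q.rnDeriv μ y) 1 with hg_def
  have hf : Measurable f := (Measure.measurable_rnDeriv P μ).min measurable_const
  have hg : Measurable g := (Measure.measurable_rnDeriv Q μ).min measurable_const
  have hf1 : ∀ y, f y ≤ 1 := fun y => min_le_right _ _
  have hg1 : ∀ y, g y ≤ 1 := fun y => min_le_right _ _
  have hffin : ∀ y, f y ≠ ∞ := fun y => ((hf1 y).trans_lt ENNReal.one_lt_top).ne
  have hgfin : ∀ y, g y ≠ ∞ := fun y => ((hg1 y).trans_lt ENNReal.one_lt_top).ne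
  have hPf : μ.withDensity f = P := by
    have hfae : f =ᵐ[μ] P.rnDeriv μ := by
      filter_upwards [Measure.rnDeriv_le_one_of_le hPle] with y hy
      simpa [hf_def] using min_eq_left hy
    rw [withDensity_congr_ae hfae]
    exact Measure.withDensity_rnDeriv_eq P μ hPac
  have hQg : μ.withDensity g = Q := by
    have hgae : g =ᵐ[μ] Q.rnDeriv μ := by
      filter_upwards [Measure.rnDeriv_le_one_of_le hQle] with y hy
      simpa [hg_def] using min_eq_left hy
    rw [withDensity_congr_ae hgae]
    exact Measure.withDensity_rnDeriv_eq Q μ hQac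
  have hfI : ∫⁻ y, f y ∂μ = 1 := by
    rw [← setLIntegral_univ, ← withDensity_apply f MeasurableSet.univ, hPf]
    exact measure_univ
  have hgI : ∫⁻ y, g y ∂μ = 1 := by
    rw [← setLIntegral_univ, ← withDensity_apply g MeasurableSet.univ, hQg]
    exact measure_univ
  -- the exceptional sets
  set A := {y | k * g y < f y} with hA_def
  set B := {y | k * f y < g y} with hB_def
  set S := {y | g y ≤ f y} with hS_def
  set T := {y | f y ≤ g y} with hT_def
  have hmA : MeasurableSet A := measurableSet_lt (hg.const_mul k) hf
  have hmB : MeasurableSet B := measurableSet_lt (hf.const_mul k) hg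
  have hmS : MeasurableSet S := measurableSet_le hg hf
  have hmT : MeasurableSet T := measurableSet_le hf hg
  -- measurable density pieces
  have hmaden : Measurable (fun y => if k * g y < f y then f y - k * g y else 0) :=
    Measurable.ite hmA (hf.sub (hg.const_mul k)) measurable_const
  have hmbden : Measurable (fun y => if k * f y < g y then g y - k * f y else 0) :=
    Measurable.ite hmB (hg.sub (hf.const_mul k)) measurable_const
  have hmwden : Measurable (fun y => if g y ≤ f y then min (f y) (k * g y) - k' * g y else 0) :=
    Measurable.ite hmS ((hf.min (hg.const_mul k)).sub (hg.const_mul k')) measurable_const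
  have hmwtden : Measurable (fun y => if f y ≤ g y then min (g y) (k * f y) - k' * f y else 0) :=
    Measurable.ite hmT ((hg.min (hf.const_mul k)).sub (hf.const_mul k')) measurable_const
  set aR := ∫⁻ y, (if k * g y < f y then f y - k * g y else 0) ∂μ with haR_def
  set bR := ∫⁻ y, (if k * f y < g y then g y - k * f y else 0) ∂μ with hbR_def
  set W := ∫⁻ y, (if g y ≤ f y then min (f y) (k * g y) - k' * g y else 0) ∂μ with hW_def
  set WT := ∫⁻ y, (if f y ≤ g y then min (g y) (k * f y) - k' * f y else 0) ∂μ with hWT_def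
  have hbudget1 : bR ≤ aR + W := budget μ k k' hk1 hk'1 hktop f g hf hg hfI hgI
  have hbudget2 : aR ≤ bR + WT := budget μ k k' hk1 hk'1 hktop g f hg hf hgI hfI
  -- aR = P A - k * Q A
  have hPA : P A = aR + k * Q A := by
    have h1 : P A = ∫⁻ y in A, f y ∂μ := by rw [← hPf]; exact withDensity_apply f hmA
    have h2 : ∫⁻ y in A, f y ∂μ
        = ∫⁻ y in A, ((f y - k * g y) + k * g y) ∂μ := by
      refine setLIntegral_congr_fun hmA (fun y hy => ?_)
      exact (tsub_add_cancel_of_le (le_of_lt hy)).symm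
    have h3 : ∫⁻ y in A, ((f y - k * g y) + k * g y) ∂μ
        = ∫⁻ y in A, (f y - k * g y) ∂μ + ∫⁻ y in A, k * g y ∂μ :=
      lintegral_add_left (hf.sub (hg.const_mul k)) _
    have h4 : ∫⁻ y in A, (f y - k * g y) ∂μ = aR := by
      rw [haR_def, ← lintegral_indicator hmA]
      refine (lintegral_congr fun y => ?_).symm
      by_cases h : k * g y < f y <;>
        simp [Set.indicator_apply, Set.mem_setOf_eq, hA_def, h]
    have h5 : ∫⁻ y in A, k * g y ∂μ = k * Q A := by
      rw [← hQg, withDensity_apply g hmA, lintegral_const_mul k hg]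
    rw [h1, h2, h3, h4, h5]
  have hQB : Q B = bR + k * P B := by
    have h1 : Q B = ∫⁻ y in B, g y ∂μ := by rw [← hQg]; exact withDensity_apply g hmB
    have h2 : ∫⁻ y in B, g y ∂μ
        = ∫⁻ y in B, ((g y - k * f y) + k * f y) ∂μ := by
      refine setLIntegral_congr_fun hmB (fun y hy => ?_)
      exact (tsub_add_cancel_of_le (le_of_lt hy)).symm
    have h3 : ∫⁻ y in B, ((g y - k * f y) + k * f y) ∂μ
        = ∫⁻ y in B, (g y - k * f y) ∂μ + ∫⁻ y in B, k * f y ∂μ :=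
      lintegral_add_left (hg.sub (hf.const_mul k)) _
    have h4 : ∫⁻ y in B, (g y - k * f y) ∂μ = bR := by
      rw [hbR_def, ← lintegral_indicator hmB]
      refine (lintegral_congr fun y => ?_).symm
      by_cases h : k * f y < g y <;>
        simp [Set.indicator_apply, Set.mem_setOf_eq, hB_def, h]
    have h5 : ∫⁻ y in B, k * f y ∂μ = k * P B := by
      rw [← hPf, withDensity_apply f hmB, lintegral_const_mul k hf]
    rw [h1, h2, h3, h4, h5]
  have haRδ : aR ≤ ENNReal.ofReal δ := by
    have h := hPQ A hmA
    rw [hPA] at h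
    have h2 : aR + k * Q A ≤ ENNReal.ofReal δ + k * Q A := by
      rwa [add_comm (ENNReal.ofReal δ)]
    exact (ENNReal.add_le_add_iff_right (ENNReal.mul_ne_top hktop (measure_ne_top Q A))).mp h2
  have hbRδ : bR ≤ ENNReal.ofReal δ := by
    have h := hQP B hmB
    rw [hQB] at h
    have h2 : bR + k * P B ≤ ENNReal.ofReal δ + k * P B := by
      rwa [add_comm (ENNReal.ofReal δ)]
    exact (ENNReal.add_le_add_iff_right (ENNReal.mul_ne_top hktop (measure_ne_top P B))).mp h2
  -- bounds by one
  have haR1 : aR ≤ 1 := by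
    rw [haR_def, ← hfI]
    refine lintegral_mono fun y => ?_
    by_cases h : k * g y < f y
    · rw [if_pos h]; exact tsub_le_self
    · rw [if_neg h]; exact zero_le
  have hbR1 : bR ≤ 1 := by
    rw [hbR_def, ← hgI]
    refine lintegral_mono fun y => ?_
    by_cases h : k * f y < g y
    · rw [if_pos h]; exact tsub_le_self
    · rw [if_neg h]; exact zero_le
  have hW1 : W ≤ 1 := by
    rw [hW_def, ← hfI]
    refine lintegral_mono fun y => ?_
    by_cases h : g y ≤ f y
    · rw [if_pos h]
      exact le_trans tsub_le_self (min_le_left _ _)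
    · rw [if_neg h]; exact zero_le
  have hWT1 : WT ≤ 1 := by
    rw [hWT_def, ← hgI]
    refine lintegral_mono fun y => ?_
    by_cases h : f y ≤ g y
    · rw [if_pos h]
      exact le_trans tsub_le_self (min_le_left _ _)
    · rw [if_neg h]; exact zero_le
  have hWfin : W ≠ ∞ := (hW1.trans_lt ENNReal.one_lt_top).ne
  have hWTfin : WT ≠ ∞ := (hWT1.trans_lt ENNReal.one_lt_top).ne
  -- the mass to peel off
  set dE := max aR bR with hdE_def
  have hdE1 : dE ≤ 1 := max_le haR1 hbR1
  have hdEfin : dE ≠ ∞ := (hdE1.trans_lt ENNReal.one_lt_top).ne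
  have hdEδ : dE ≤ ENNReal.ofReal δ := max_le haRδ hbRδ
  set δ' := dE.toReal with hδ'_def
  have hδ'0 : 0 ≤ δ' := ENNReal.toReal_nonneg
  have hδ'δ : δ' ≤ δ := by
    calc δ' ≤ (ENNReal.ofReal δ).toReal := ENNReal.toReal_mono ENNReal.ofReal_ne_top hdEδ
      _ = δ := ENNReal.toReal_ofReal hδ
  have hofδ' : ENNReal.ofReal δ' = dE := ENNReal.ofReal_toReal hdEfin
  have hof1δ' : ENNReal.ofReal (1 - δ') = 1 - dE := by
    rw [ENNReal.ofReal_sub 1 hδ'0, ENNReal.ofReal_one, hofδ']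
  -- the peeled densities
  set cP := (dE - aR) / W with hcP_def
  set cQ := (dE - bR) / WT with hcQ_def
  have hdEaRW : dE - aR ≤ W :=
    tsub_le_iff_right.mpr (max_le le_add_self (hbudget1.trans_eq (add_comm aR W)))
  have hdEbRWT : dE - bR ≤ WT :=
    tsub_le_iff_right.mpr (max_le (hbudget2.trans_eq (add_comm bR WT)) le_add_self)
  have hcP1 : cP ≤ 1 := ENNReal.div_le_of_le_mul (by rw [one_mul]; exact hdEaRW)
  have hcQ1 : cQ ≤ 1 := ENNReal.div_le_of_le_mul (by rw [one_mul]; exact hdEbRWT)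
  have hcPW : cP * W = dE - aR := by
    by_cases hW0 : W = 0
    · have h0 : dE - aR = 0 := le_antisymm (hW0 ▸ hdEaRW) (zero_le)
      rw [hcP_def, h0]
      simp
    · exact ENNReal.div_mul_cancel hW0 hWfin
  have hcQWT : cQ * WT = dE - bR := by
    by_cases hWT0 : WT = 0
    · have h0 : dE - bR = 0 := le_antisymm (hWT0 ▸ hdEbRWT) (zero_le)
      rw [hcQ_def, h0]
      simp
    · exact ENNReal.div_mul_cancel hWT0 hWTfin
  set p := pden k k' cP f g with hp_def
  set q := pden k k' cQ g f with hq_def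
  have hpm : Measurable p := measurable_pden hf hg
  have hqm : Measurable q := measurable_pden hg hf
  have hple : ∀ y, p y ≤ f y := fun y => pden_le hk1 hk'1 hcP1 y
  have hqle : ∀ y, q y ≤ g y := fun y => pden_le hk1 hk'1 hcQ1 y
  have hintp : ∫⁻ y, p y ∂μ = dE := by
    have e1 : ∫⁻ y, p y ∂μ = aR
        + ∫⁻ y, cP * (if g y ≤ f y then min (f y) (k * g y) - k' * g y else 0) ∂μ := by
      rw [hp_def]
      simp only [pden]
      rw [lintegral_add_left hmaden, haR_def]
    rw [e1, lintegral_const_mul cP hmwden, ← hW_def, hcPW,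
      add_tsub_cancel_of_le (le_max_left aR bR)]
  have hintq : ∫⁻ y, q y ∂μ = dE := by
    have e1 : ∫⁻ y, q y ∂μ = bR
        + ∫⁻ y, cQ * (if f y ≤ g y then min (g y) (k * f y) - k' * f y else 0) ∂μ := by
      rw [hq_def]
      simp only [pden]
      rw [lintegral_add_left hmbden, hbR_def]
    rw [e1, lintegral_const_mul cQ hmwtden, ← hWT_def, hcQWT,
      add_tsub_cancel_of_le (le_max_right aR bR)]
  have hintfp : ∫⁻ y, (f y - p y) ∂μ = 1 - dE := by
    rw [lintegral_sub hpm (by rw [hintp]; exact hdEfin) (ae_of_all _ hple), hfI, hintp]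
  have hintgq : ∫⁻ y, (g y - q y) ∂μ = 1 - dE := by
    rw [lintegral_sub hqm (by rw [hintq]; exact hdEfin) (ae_of_all _ hqle), hgI, hintq]
  set P'm := μ.withDensity (fun y => f y - p y) with hP'm_def
  set P''m := μ.withDensity p with hP''m_def
  set Q'm := μ.withDensity (fun y => g y - q y) with hQ'm_def
  set Q''m := μ.withDensity q with hQ''m_def
  have hPsplit : P'm + P''m = P := by
    rw [hP'm_def, hP''m_def, ← withDensity_add_left (f := fun y => f y - p y) (hf.sub hpm)]
    have hfun : ((fun y => f y - p y) + p) = f := funext fun y => tsub_add_cancel_of_le (hple y)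
    rw [hfun, hPf]
  have hQsplit : Q'm + Q''m = Q := by
    rw [hQ'm_def, hQ''m_def, ← withDensity_add_left (f := fun y => g y - q y) (hg.sub hqm)]
    have hfun : ((fun y => g y - q y) + q) = g := funext fun y => tsub_add_cancel_of_le (hqle y)
    rw [hfun, hQg]
  have hP'mU : P'm univ = 1 - dE := by
    rw [hP'm_def, withDensity_apply _ MeasurableSet.univ, setLIntegral_univ, hintfp]
  have hQ'mU : Q'm univ = 1 - dE := by
    rw [hQ'm_def, withDensity_apply _ MeasurableSet.univ, setLIntegral_univ, hintgq]
  have hP''mU : P''m univ = dE := by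
    rw [hP''m_def, withDensity_apply _ MeasurableSet.univ, setLIntegral_univ, hintp]
  have hQ''mU : Q''m univ = dE := by
    rw [hQ''m_def, withDensity_apply _ MeasurableSet.univ, setLIntegral_univ, hintq]
  have hpS : ∀ y, y ∉ S → p y = 0 := by
    intro y hy
    rw [hp_def]
    exact pden_of_lt hk1 (not_le.mp hy)
  have hqT : ∀ y, y ∉ T → q y = 0 := by
    intro y hy
    rw [hq_def]
    exact pden_of_lt hk1 (not_le.mp hy)
  have hP''mS : P''m S = dE := by
    have h1 : P''m S = ∫⁻ y in S, p y ∂μ := by rw [hP''m_def]; exact withDensity_apply p hmS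
    have h2 : ∫⁻ y in Sᶜ, p y ∂μ = 0 := by
      have e : ∫⁻ y in Sᶜ, p y ∂μ = ∫⁻ y in Sᶜ, 0 ∂μ :=
        setLIntegral_congr_fun hmS.compl (fun y hy => hpS y hy)
      rw [e, lintegral_zero]
    have h3 := lintegral_add_compl p hmS (μ := μ)
    rw [h2, add_zero, hintp] at h3
    exact h1.trans h3
  have hQ''mT : Q''m T = dE := by
    have h1 : Q''m T = ∫⁻ y in T, q y ∂μ := by rw [hQ''m_def]; exact withDensity_apply q hmT
    have h2 : ∫⁻ y in Tᶜ, q y ∂μ = 0 := by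
      have e : ∫⁻ y in Tᶜ, q y ∂μ = ∫⁻ y in Tᶜ, 0 ∂μ :=
        setLIntegral_congr_fun hmT.compl (fun y hy => hqT y hy)
      rw [e, lintegral_zero]
    have h3 := lintegral_add_compl q hmT (μ := μ)
    rw [h2, add_zero, hintq] at h3
    exact h1.trans h3
  have hSle : ∀ s : Set Y, MeasurableSet s → s ⊆ S → Q s ≤ P s := by
    intro s hs hsub
    rw [← hPf, ← hQg, withDensity_apply f hs, withDensity_apply g hs]
    exact setLIntegral_mono hf fun y hy => hsub hy
  have hTle : ∀ s : Set Y, MeasurableSet s → s ⊆ T → P s ≤ Q s := by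
    intro s hs hsub
    rw [← hPf, ← hQg, withDensity_apply f hs, withDensity_apply g hs]
    exact setLIntegral_mono hg fun y hy => hsub hy
  have hr1 : ∀ y, g y - q y ≤ k * (f y - p y) := by
    intro y
    rw [hp_def, hq_def]
    exact pden_ratio hk1 hk'1 hkk' hcP1 (hffin y) (hgfin y)
  have hr2 : ∀ y, f y - p y ≤ k * (g y - q y) := by
    intro y
    rw [hp_def, hq_def]
    exact pden_ratio hk1 hk'1 hkk' hcQ1 (hgfin y) (hffin y)
  rcases lt_or_eq_of_le hdE1 with hdElt | hdEeq1
  · -- main case : dE < 1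
    have h1dE0 : (1:ℝ≥0∞) - dE ≠ 0 := (tsub_pos_of_lt hdElt).ne'
    have h1dEfin : (1:ℝ≥0∞) - dE ≠ ∞ := (tsub_le_self.trans_lt ENNReal.one_lt_top).ne
    set P' := ((1:ℝ≥0∞) - dE)⁻¹ • P'm with hP'_def
    set Q' := ((1:ℝ≥0∞) - dE)⁻¹ • Q'm with hQ'_def
    have hP'prob : IsProbabilityMeasure P' := by
      constructor
      rw [hP'_def, Measure.smul_apply, smul_eq_mul, hP'mU]
      exact ENNReal.inv_mul_cancel h1dE0 h1dEfin
    have hQ'prob : IsProbabilityMeasure Q' := by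
      constructor
      rw [hQ'_def, Measure.smul_apply, smul_eq_mul, hQ'mU]
      exact ENNReal.inv_mul_cancel h1dE0 h1dEfin
    have hratio : ∀ E : Set Y, MeasurableSet E → k' * P' E ≤ Q' E ∧ Q' E ≤ k * P' E := by
      intro E hE
      have hPE : P' E = (1 - dE)⁻¹ * ∫⁻ y in E, (f y - p y) ∂μ := by
        rw [hP'_def, Measure.smul_apply, smul_eq_mul, hP'm_def, withDensity_apply _ hE]
      have hQE : Q' E = (1 - dE)⁻¹ * ∫⁻ y in E, (g y - q y) ∂μ := by
        rw [hQ'_def, Measure.smul_apply, smul_eq_mul, hQ'm_def, withDensity_apply _ hE]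
      constructor
      · rw [hPE, hQE, ← mul_assoc, mul_comm k' _, mul_assoc]
        refine mul_le_mul_right ?_ _
        rw [← lintegral_const_mul k' (f := fun y => f y - p y) (hf.sub hpm)]
        refine lintegral_mono fun y => ?_
        calc k' * (f y - p y) ≤ k' * (k * (g y - q y)) := mul_le_mul_right (hr2 y) _
          _ = (k' * k) * (g y - q y) := by rw [mul_assoc]
          _ = g y - q y := by rw [hk'k, one_mul]
      · rw [hPE, hQE, ← mul_assoc, mul_comm k _, mul_assoc]
        refine mul_le_mul_right ?_ _
        rw [← lintegral_const_mul k (f := fun y => f y - p y) (hf.sub hpm)]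
        exact lintegral_mono fun y => hr1 y
    by_cases hdE0 : dE = 0
    · -- δ' = 0
      have hP''m0 : P''m = 0 := Measure.measure_univ_eq_zero.mp (by rw [hP''mU, hdE0])
      have hQ''m0 : Q''m = 0 := Measure.measure_univ_eq_zero.mp (by rw [hQ''mU, hdE0])
      have hPP' : P = P'm := by rw [← hPsplit, hP''m0, add_zero]
      have hQQ' : Q = Q'm := by rw [← hQsplit, hQ''m0, add_zero]
      have hμuniv : μ univ = 2 := by
        rw [hμ_def, Measure.add_apply, measure_univ, measure_univ, one_add_one_eq_two]
      have hμS0 : μ S ≠ 0 := by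
        intro h0
        have hae1 : ∀ᵐ y ∂μ, y ∉ S := measure_eq_zero_iff_ae_notMem.mp h0
        have hfg_ae : ∀ᵐ y ∂μ, f y < g y := by
          filter_upwards [hae1] with y hy
          exact not_le.mp hy
        have hsub : ∫⁻ y, (g y - f y) ∂μ = 0 := by
          rw [lintegral_sub hf (by rw [hfI]; exact ENNReal.one_ne_top)
            (hfg_ae.mono fun y hy => hy.le), hgI, hfI, tsub_self]
        have hge := (lintegral_eq_zero_iff (hg.sub hf)).mp hsub
        have hfalse : ∀ᵐ _ ∂μ, False := by
          filter_upwards [hfg_ae, hge] with y h1 h2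
          exact absurd (tsub_eq_zero_iff_le.mp h2) (not_le.mpr h1)
        have h2 : μ univ = 0 := by simpa [ae_iff] using hfalse
        rw [hμuniv] at h2
        norm_num at h2
      have hμT0 : μ T ≠ 0 := by
        intro h0
        have hae1 : ∀ᵐ y ∂μ, y ∉ T := measure_eq_zero_iff_ae_notMem.mp h0
        have hfg_ae : ∀ᵐ y ∂μ, g y < f y := by
          filter_upwards [hae1] with y hy
          exact not_le.mp hy
        have hsub : ∫⁻ y, (f y - g y) ∂μ = 0 := by
          rw [lintegral_sub hg (by rw [hgI]; exact ENNReal.one_ne_top)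
            (hfg_ae.mono fun y hy => hy.le), hgI, hfI, tsub_self]
        have hge := (lintegral_eq_zero_iff (hf.sub hg)).mp hsub
        have hfalse : ∀ᵐ _ ∂μ, False := by
          filter_upwards [hfg_ae, hge] with y h1 h2
          exact absurd (tsub_eq_zero_iff_le.mp h2) (not_le.mpr h1)
        have h2 : μ univ = 0 := by simpa [ae_iff] using hfalse
        rw [hμuniv] at h2
        norm_num at h2
      refine ⟨δ', P', Q', (μ S)⁻¹ • μ.restrict S, (μ T)⁻¹ • μ.restrict T, hδ'0, hδ'δ,
        hP'prob, hQ'prob, ?_, ?_, ?_, ?_, hratio, S, T, hmS, hmT, ?_, ?_, hSle, hTle⟩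
      · constructor
        rw [Measure.smul_apply, smul_eq_mul, Measure.restrict_apply_univ]
        exact ENNReal.inv_mul_cancel hμS0 (measure_ne_top μ S)
      · constructor
        rw [Measure.smul_apply, smul_eq_mul, Measure.restrict_apply_univ]
        exact ENNReal.inv_mul_cancel hμT0 (measure_ne_top μ T)
      · rw [hof1δ', hofδ', hdE0, tsub_zero, one_smul, zero_smul, add_zero,
          hP'_def, hdE0, tsub_zero, inv_one, one_smul]
        exact hPP'
      · rw [hof1δ', hofδ', hdE0, tsub_zero, one_smul, zero_smul, add_zero,
          hQ'_def, hdE0, tsub_zero, inv_one, one_smul]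
        exact hQQ'
      · rw [Measure.smul_apply, smul_eq_mul, Measure.restrict_apply hmS, Set.inter_self]
        exact ENNReal.inv_mul_cancel hμS0 (measure_ne_top μ S)
      · rw [Measure.smul_apply, smul_eq_mul, Measure.restrict_apply hmT, Set.inter_self]
        exact ENNReal.inv_mul_cancel hμT0 (measure_ne_top μ T)
    · -- 0 < dE < 1 : the generic case
      refine ⟨δ', P', Q', dE⁻¹ • P''m, dE⁻¹ • Q''m, hδ'0, hδ'δ, hP'prob, hQ'prob,
        ?_, ?_, ?_, ?_, hratio, S, T, hmS, hmT, ?_, ?_, hSle, hTle⟩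
      · constructor
        rw [Measure.smul_apply, smul_eq_mul, hP''mU]
        exact ENNReal.inv_mul_cancel hdE0 hdEfin
      · constructor
        rw [Measure.smul_apply, smul_eq_mul, hQ''mU]
        exact ENNReal.inv_mul_cancel hdE0 hdEfin
      · rw [hof1δ', hofδ', hP'_def, smul_smul, smul_smul,
          ENNReal.mul_inv_cancel h1dE0 h1dEfin, ENNReal.mul_inv_cancel hdE0 hdEfin,
          one_smul, one_smul]
        exact hPsplit.symm
      · rw [hof1δ', hofδ', hQ'_def, smul_smul, smul_smul,
          ENNReal.mul_inv_cancel h1dE0 h1dEfin, ENNReal.mul_inv_cancel hdE0 hdEfin,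
          one_smul, one_smul]
        exact hQsplit.symm
      · rw [Measure.smul_apply, smul_eq_mul, hP''mS]
        exact ENNReal.inv_mul_cancel hdE0 hdEfin
      · rw [Measure.smul_apply, smul_eq_mul, hQ''mT]
        exact ENNReal.inv_mul_cancel hdE0 hdEfin
  · -- dE = 1
    have hδ'1 : δ' = 1 := by rw [hδ'_def, hdEeq1]; exact ENNReal.toReal_one
    have hfp0 : (fun y => f y - p y) =ᵐ[μ] 0 :=
      (lintegral_eq_zero_iff (f := fun y => f y - p y) (hf.sub hpm)).mp (by rw [hintfp, hdEeq1, tsub_self])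
    have hpf : p =ᵐ[μ] f := by
      filter_upwards [hfp0] with y hy
      exact le_antisymm (hple y) (tsub_eq_zero_iff_le.mp hy)
    have hPP'' : P''m = P := by rw [hP''m_def, withDensity_congr_ae hpf, hPf]
    have hgq0 : (fun y => g y - q y) =ᵐ[μ] 0 :=
      (lintegral_eq_zero_iff (f := fun y => g y - q y) (hg.sub hqm)).mp (by rw [hintgq, hdEeq1, tsub_self])
    have hqg : q =ᵐ[μ] g := by
      filter_upwards [hgq0] with y hy
      exact le_antisymm (hqle y) (tsub_eq_zero_iff_le.mp hy)
    have hQQ'' : Q''m = Q := by rw [hQ''m_def, withDensity_congr_ae hqg, hQg]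
    refine ⟨δ', P, P, P''m, Q''m, hδ'0, hδ'δ, inferInstance, inferInstance,
      ⟨by rw [hP''mU, hdEeq1]⟩, ⟨by rw [hQ''mU, hdEeq1]⟩, ?_, ?_, ?_, S, T, hmS, hmT,
      ?_, ?_, hSle, hTle⟩
    · rw [hδ'1, sub_self, ENNReal.ofReal_zero, ENNReal.ofReal_one, zero_smul, one_smul,
        zero_add, hPP'']
    · rw [hδ'1, sub_self, ENNReal.ofReal_zero, ENNReal.ofReal_one, zero_smul, one_smul,
        zero_add, hQQ'']
    · intro E hE
      constructor
      · calc k' * P E ≤ 1 * P E := mul_le_mul_left hk'1 _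
          _ = P E := one_mul _
      · calc P E = 1 * P E := (one_mul _).symm
          _ ≤ k * P E := mul_le_mul_left hk1 _
    · rw [hP''mS, hdEeq1]
    · rw [hQ''mT, hdEeq1]
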